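/- Let a > b be real numbers and define on ℝ: Φ(x) = ½(x-a)² + (a-b)² for x < 2a-b, Φ(x) = ¼(x-b)² + ½(a-b)² for x ≥ 2a-b; Ψ(x) = ¼(x-a)² + ½(a-b)² for x < 2b-a, Ψ(x) = ½(x-b)² + (a-b)² for x ≥ 2b-a. Then Φ and Ψ are C^{1,1} functions, Φ = 2Ψ on (-∞, 2b-a] ∩ (-∞, 2a-b], Ψ ≥ ½Φ and Φ ≥ ½Ψ everywhere, and |Φ(x) - P(x)| + |Ψ(x) - Q(x)| ≤ C(a-b)² for |x| ≤ 1, where P(x) = ½min{x-a,0}² + ¼max{x-b,0}², Q(x) = ¼min{x-a,0}² + ½max{x-b,0}², and C is an absolute constant. -/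

import Mathlib

/-- First component of the 1-D approximate solution near unstable half-space profiles. -/
noncomputable def Phi2 (a b : ℝ) (x : ℝ) : ℝ :=
  if x < 2*a - b then (1/2) * (x - a)^2 + (a - b)^2
  else (1/4) * (x - b)^2 + (1/2) * (a - b)^2

/-- Second component of the 1-D approximate solution near unstable half-space profiles. -/
noncomputable def Psi2 (a b : ℝ) (x : ℝ) : ℝ :=
  if x < 2*b - a then (1/4) * (x - a)^2 + (1/2) * (a - b)^2
  else (1/2) * (x - b)^2 + (a - b)^2

/-- The unstable half-space profile `P`. -/
noncomputable def Pun (a b : ℝ) (x : ℝ) : ℝ :=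
  (1/2) * (min (x - a) 0)^2 + (1/4) * (max (x - b) 0)^2

/-- The unstable half-space profile `Q`. -/
noncomputable def Qun (a b : ℝ) (x : ℝ) : ℝ :=
  (1/4) * (min (x - a) 0)^2 + (1/2) * (max (x - b) 0)^2


lemma minsq_hasDerivAt (t : ℝ) :
    HasDerivAt (fun s : ℝ => min s 0 ^ 2) (2 * min t 0) t := by
  rcases lt_trichotomy t 0 with h | h | h
  · have he : (fun s : ℝ => min s 0 ^ 2) =ᶠ[nhds t] fun s => s ^ 2 := by
      filter_upwards [Iio_mem_nhds h] with s hs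
      simp [min_eq_left (le_of_lt (Set.mem_Iio.mp hs))]
    have h2 : HasDerivAt (fun s : ℝ => s ^ 2) (2 * t) t := by
      simpa using hasDerivAt_pow 2 t
    rw [min_eq_left h.le]
    exact h2.congr_of_eventuallyEq he
  · subst h
    rw [show min (0:ℝ) 0 = 0 by simp, mul_zero]
    rw [hasDerivAt_iff_isLittleO]
    simp only [sub_zero, smul_zero, min_self, ne_eq, OfNat.ofNat_ne_zero,
      not_false_eq_true, zero_pow, sub_zero]
    rw [Asymptotics.isLittleO_iff]
    intro c hc
    filter_upwards [Metric.closedBall_mem_nhds (0:ℝ) hc] with x hx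
    have hx' : |x| ≤ c := by simpa [Real.dist_eq] using hx
    have h1 : |min x 0| ≤ |x| := by
      rcases le_total x 0 with h | h
      · rw [min_eq_left h]
      · rw [min_eq_right h]; simp [abs_nonneg]
    rw [Real.norm_eq_abs, Real.norm_eq_abs, abs_pow, sq_abs]
    nlinarith [abs_nonneg x, abs_nonneg (min x 0), sq_abs (min x 0)]
  · have he : (fun s : ℝ => min s 0 ^ 2) =ᶠ[nhds t] fun _ => (0:ℝ) := by
      filter_upwards [Ioi_mem_nhds h] with s hs
      simp [min_eq_right (le_of_lt (Set.mem_Ioi.mp hs))]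
    rw [min_eq_right h.le, mul_zero]
    exact (hasDerivAt_const t 0).congr_of_eventuallyEq he

lemma maxsq_hasDerivAt (t : ℝ) :
    HasDerivAt (fun s : ℝ => max s 0 ^ 2) (2 * max t 0) t := by
  have h := (minsq_hasDerivAt (-t)).comp t (hasDerivAt_neg t)
  have he : (fun s : ℝ => min (-s) 0 ^ 2) = fun s : ℝ => max s 0 ^ 2 := by
    funext s
    rw [show min (-s) 0 = -(max s 0) by rw [← min_neg_neg]; simp, neg_pow]
    ring_nf
  rw [Function.comp_def] at h
  rw [he] at h
  have : 2 * min (-t) 0 * (-1) = 2 * max t 0 := by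
    rw [show min (-t) 0 = -(max t 0) by rw [← min_neg_neg]; simp]; ring
  rwa [this] at h

lemma phi2_eq (a b : ℝ) : Phi2 a b = fun x =>
    (1/4) * (x - b)^2 + (1/2) * (a - b)^2 + (1/4) * (min (x - (2*a - b)) 0)^2 := by
  funext x
  unfold Phi2
  split_ifs with h
  · rw [min_eq_left (by linarith)]; ring
  · rw [min_eq_right (by push_neg at h; linarith)]; ring

lemma psi2_eq (a b : ℝ) : Psi2 a b = fun x =>
    (1/4) * (x - a)^2 + (1/2) * (a - b)^2 + (1/4) * (max (x - (2*b - a)) 0)^2 := by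
  funext x
  unfold Psi2
  split_ifs with h
  · rw [max_eq_right (by linarith)]; ring
  · rw [max_eq_left (by push_neg at h; linarith)]; ring

lemma phi2_hasDerivAt (a b x : ℝ) :
    HasDerivAt (Phi2 a b) ((1/2)*(x - b) + (1/2) * min (x - (2*a - b)) 0) x := by
  rw [phi2_eq]
  have h1 : HasDerivAt (fun x : ℝ => (x - b)^2) (2*(x - b)) x := by
    exact (((hasDerivAt_id x).sub_const b).pow 2).congr_deriv (by norm_num)
  have h2 : HasDerivAt (fun x : ℝ => min (x - (2*a - b)) 0 ^ 2)
      (2 * min (x - (2*a - b)) 0) x := by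
    have := (minsq_hasDerivAt (x - (2*a - b))).comp x ((hasDerivAt_id x).sub_const (2*a - b))
    simpa [Function.comp_def] using this
  have H := ((h1.const_mul (1/4:ℝ)).add_const ((1/2) * (a - b)^2)).add (h2.const_mul (1/4:ℝ))
  exact H.congr_deriv (by ring)

lemma psi2_hasDerivAt (a b x : ℝ) :
    HasDerivAt (Psi2 a b) ((1/2)*(x - a) + (1/2) * max (x - (2*b - a)) 0) x := by
  rw [psi2_eq]
  have h1 : HasDerivAt (fun x : ℝ => (x - a)^2) (2*(x - a)) x := by
    exact (((hasDerivAt_id x).sub_const a).pow 2).congr_deriv (by norm_num)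
  have h2 : HasDerivAt (fun x : ℝ => max (x - (2*b - a)) 0 ^ 2)
      (2 * max (x - (2*b - a)) 0) x := by
    have := (maxsq_hasDerivAt (x - (2*b - a))).comp x ((hasDerivAt_id x).sub_const (2*b - a))
    simpa [Function.comp_def] using this
  have H := ((h1.const_mul (1/4:ℝ)).add_const ((1/2) * (a - b)^2)).add (h2.const_mul (1/4:ℝ))
  exact H.congr_deriv (by ring)

lemma phi2_deriv (a b : ℝ) : deriv (Phi2 a b) =
    fun x => (1/2)*(x - b) + (1/2) * min (x - (2*a - b)) 0 :=
  funext fun x => (phi2_hasDerivAt a b x).deriv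

lemma psi2_deriv (a b : ℝ) : deriv (Psi2 a b) =
    fun x => (1/2)*(x - a) + (1/2) * max (x - (2*b - a)) 0 :=
  funext fun x => (psi2_hasDerivAt a b x).deriv

lemma phi2_contDiff (a b : ℝ) : ContDiff ℝ 1 (Phi2 a b) := by
  rw [contDiff_one_iff_deriv]
  refine ⟨fun x => (phi2_hasDerivAt a b x).differentiableAt, ?_⟩
  rw [phi2_deriv]
  continuity

lemma psi2_contDiff (a b : ℝ) : ContDiff ℝ 1 (Psi2 a b) := by
  rw [contDiff_one_iff_deriv]
  refine ⟨fun x => (psi2_hasDerivAt a b x).differentiableAt, ?_⟩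
  rw [psi2_deriv]
  continuity

lemma min_lip (u v : ℝ) : |min u 0 - min v 0| ≤ |u - v| := by
  have h1 := le_abs_self (u - v)
  have h2 := neg_abs_le (u - v)
  rcases le_total u 0 with h | h <;> rcases le_total v 0 with h' | h' <;>
    simp only [min_eq_left, min_eq_right, h, h'] <;>
    rw [abs_sub_le_iff] <;> constructor <;> linarith

lemma max_lip (u v : ℝ) : |max u 0 - max v 0| ≤ |u - v| := by
  have h1 := le_abs_self (u - v)
  have h2 := neg_abs_le (u - v)
  rcases le_total u 0 with h | h <;> rcases le_total v 0 with h' | h' <;>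
    simp only [max_eq_left, max_eq_right, h, h'] <;>
    rw [abs_sub_le_iff] <;> constructor <;> linarith

lemma phi2_deriv_lip (a b : ℝ) : LipschitzWith 1 (deriv (Phi2 a b)) := by
  rw [phi2_deriv]
  apply LipschitzWith.of_dist_le_mul
  intro x y
  simp only [Real.dist_eq, NNReal.coe_one, one_mul]
  have key := min_lip (x - (2*a - b)) (y - (2*a - b))
  rw [show x - (2*a - b) - (y - (2*a - b)) = x - y by ring] at key
  have he : (1/2)*(x - b) + (1/2) * min (x - (2*a - b)) 0 -
      ((1/2)*(y - b) + (1/2) * min (y - (2*a - b)) 0)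
      = (1/2)*(x - y) + (1/2)*(min (x - (2*a - b)) 0 - min (y - (2*a - b)) 0) := by ring
  rw [he]
  calc _ ≤ |(1/2)*(x - y)| + |(1/2)*(min (x - (2*a - b)) 0 - min (y - (2*a - b)) 0)| :=
        abs_add_le _ _
    _ ≤ |x - y| := by
        rw [abs_mul, abs_mul]
        rw [show |(1/2 : ℝ)| = 1/2 by norm_num]
        linarith

lemma psi2_deriv_lip (a b : ℝ) : LipschitzWith 1 (deriv (Psi2 a b)) := by
  rw [psi2_deriv]
  apply LipschitzWith.of_dist_le_mul
  intro x y
  simp only [Real.dist_eq, NNReal.coe_one, one_mul]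
  have key := max_lip (x - (2*b - a)) (y - (2*b - a))
  rw [show x - (2*b - a) - (y - (2*b - a)) = x - y by ring] at key
  have he : (1/2)*(x - a) + (1/2) * max (x - (2*b - a)) 0 -
      ((1/2)*(y - a) + (1/2) * max (y - (2*b - a)) 0)
      = (1/2)*(x - y) + (1/2)*(max (x - (2*b - a)) 0 - max (y - (2*b - a)) 0) := by ring
  rw [he]
  calc _ ≤ |(1/2)*(x - y)| + |(1/2)*(max (x - (2*b - a)) 0 - max (y - (2*b - a)) 0)| :=
        abs_add_le _ _
    _ ≤ |x - y| := by
        rw [abs_mul, abs_mul]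
        rw [show |(1/2 : ℝ)| = 1/2 by norm_num]
        linarith

lemma err_phi (a b x : ℝ) (h : b < a) : |Phi2 a b x - Pun a b x| ≤ 2 * (a - b)^2 := by
  unfold Phi2 Pun
  rcases le_total (x - a) 0 with h1 | h1 <;> rcases le_total (x - b) 0 with h2 | h2 <;>
    split_ifs with h3 <;>
    simp only [min_eq_left h1, min_eq_right h1, max_eq_right h2, max_eq_left h2] <;>
    rw [abs_le] <;> constructor <;> nlinarith [sq_nonneg (x - a), sq_nonneg (x - b), sq_nonneg (a - b), sq_nonneg (x - 2*a + b)]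

lemma err_psi (a b x : ℝ) (h : b < a) : |Psi2 a b x - Qun a b x| ≤ 2 * (a - b)^2 := by
  unfold Psi2 Qun
  rcases le_total (x - a) 0 with h1 | h1 <;> rcases le_total (x - b) 0 with h2 | h2 <;>
    split_ifs with h3 <;>
    simp only [min_eq_left h1, min_eq_right h1, max_eq_right h2, max_eq_left h2] <;>
    rw [abs_le] <;> constructor <;> nlinarith [sq_nonneg (x - a), sq_nonneg (x - b), sq_nonneg (a - b), sq_nonneg (x - 2*b + a)]

/-- Properties of the 1-D approximate solution near unstable half-space profiles. -/
theorem stmt6 : ∃ C > (0:ℝ), ∀ a b : ℝ, b < a →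
    (ContDiff ℝ 1 (Phi2 a b) ∧ ∃ L : NNReal, LipschitzWith L (deriv (Phi2 a b))) ∧
    (ContDiff ℝ 1 (Psi2 a b) ∧ ∃ L : NNReal, LipschitzWith L (deriv (Psi2 a b))) ∧
    (∀ x : ℝ, x ≤ 2*b - a → x ≤ 2*a - b → Phi2 a b x = 2 * Psi2 a b x) ∧
    (∀ x : ℝ, Phi2 a b x / 2 ≤ Psi2 a b x ∧ Psi2 a b x / 2 ≤ Phi2 a b x) ∧
    (∀ x : ℝ, |x| ≤ 1 →
      |Phi2 a b x - Pun a b x| + |Psi2 a b x - Qun a b x| ≤ C * (a - b)^2) := by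
  refine ⟨4, by norm_num, fun a b hab => ?_⟩
  refine ⟨⟨phi2_contDiff a b, 1, phi2_deriv_lip a b⟩,
    ⟨psi2_contDiff a b, 1, psi2_deriv_lip a b⟩, ?_, ?_, ?_⟩
  · intro x hx1 hx2
    unfold Phi2 Psi2
    split_ifs with h1 h2 h2
    · ring
    · have hx : x = 2*b - a := le_antisymm hx1 (not_lt.1 h2)
      subst hx; ring
    · linarith
    · linarith
  · intro x
    unfold Phi2 Psi2
    split_ifs with h1 h2 h2
    · constructor <;> nlinarith [sq_nonneg (x - a), sq_nonneg (a - b)]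
    · constructor
      · nlinarith [sq_nonneg (x + a - 2*b)]
      · nlinarith [sq_nonneg (x - 2*a + b)]
    · constructor <;> linarith
    · constructor <;> nlinarith [sq_nonneg (x - b), sq_nonneg (a - b)]
  · intro x _
    have := err_phi a b x hab
    have := err_psi a b x hab
    linarith
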